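/- The pair u(x,t) = 4tx/(t²+x⁴), w(x,t) = 2x²(x⁴−5t²)/(t²+x⁴)² satisfies the Kaup–Boussinesq system u_t + w_x + (3/2) u u_x = 0, w_t − (1/4) u_{xxx} + (1/2) u w_x + w u_x = 0, at every point (x,t) ∈ ℝ² with (x,t) ≠ (0,0). -/

import Mathlib

noncomputable def u13 (x t : ℝ) : ℝ := 4 * t * x / (t ^ 2 + x ^ 4)

noncomputable def w13 (x t : ℝ) : ℝ := 2 * x ^ 2 * (x ^ 4 - 5 * t ^ 2) / (t ^ 2 + x ^ 4) ^ 2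

-- derivative of u in t
lemma hut13 (x t : ℝ) (hd : t ^ 2 + x ^ 4 ≠ 0) :
    HasDerivAt (fun t' => u13 x t') ((4*x^5 - 4*x*t^2)/(t^2+x^4)^2) t := by
  have hn : HasDerivAt (fun t' : ℝ => 4 * t' * x) (4 * x) t := by
    simpa using ((hasDerivAt_id t).const_mul (4:ℝ)).mul_const x
  have hden : HasDerivAt (fun t' : ℝ => t' ^ 2 + x ^ 4) (2 * t) t := by
    simpa using (hasDerivAt_pow 2 t).add_const (x ^ 4)
  have h := hn.div hden hd
  simp only [Pi.div_def] at h
  simp only [u13]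
  refine h.congr_deriv ?_
  field_simp
  ring

-- derivative of u in x
lemma hux13 (x t : ℝ) (hd : t ^ 2 + x ^ 4 ≠ 0) :
    HasDerivAt (fun x' => u13 x' t) ((4*t^3 - 12*x^4*t)/(t^2+x^4)^2) x := by
  have hn : HasDerivAt (fun x' : ℝ => 4 * t * x') (4 * t) x := by
    simpa using (hasDerivAt_id x).const_mul (4*t)
  have hden : HasDerivAt (fun x' : ℝ => t ^ 2 + x' ^ 4) (4 * x ^ 3) x := by
    simpa using (hasDerivAt_pow 4 x).const_add (t ^ 2)
  have h := hn.div hden hd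
  simp only [Pi.div_def] at h
  simp only [u13]
  refine h.congr_deriv ?_
  field_simp
  ring

-- derivative of w in x
lemma hwx13 (x t : ℝ) (hd : t ^ 2 + x ^ 4 ≠ 0) :
    HasDerivAt (fun x' => w13 x' t) ((-20*x*t^4 + 72*x^5*t^2 - 4*x^9)/(t^2+x^4)^3) x := by
  have hn : HasDerivAt (fun x' : ℝ => 2 * x' ^ 2 * (x' ^ 4 - 5 * t ^ 2))
      ((2 * (2 * x ^ 1)) * (x ^ 4 - 5 * t ^ 2) + 2 * x ^ 2 * (4 * x ^ 3)) x := by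
    exact (((hasDerivAt_pow 2 x).const_mul 2).mul
      ((hasDerivAt_pow 4 x).sub_const (5 * t ^ 2)))
  have hden : HasDerivAt (fun x' : ℝ => (t ^ 2 + x' ^ 4) ^ 2)
      (2 * (t ^ 2 + x ^ 4) ^ 1 * (4 * x ^ 3)) x := by
    simpa [Pi.pow_def] using ((hasDerivAt_pow 4 x).const_add (t ^ 2)).pow 2
  have hd2 : ((t : ℝ) ^ 2 + x ^ 4) ^ 2 ≠ 0 := pow_ne_zero _ hd
  have h := hn.div hden hd2
  simp only [Pi.div_def] at h
  simp only [w13]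
  refine h.congr_deriv ?_
  field_simp
  ring

-- derivative of w in t
lemma hwt13 (x t : ℝ) (hd : t ^ 2 + x ^ 4 ≠ 0) :
    HasDerivAt (fun t' => w13 x t') ((20*x^2*t^3 - 28*x^6*t)/(t^2+x^4)^3) t := by
  have hn : HasDerivAt (fun t' : ℝ => 2 * x ^ 2 * (x ^ 4 - 5 * t' ^ 2))
      (2 * x ^ 2 * (-(5 * (2 * t ^ 1)))) t := by
    exact (((hasDerivAt_pow 2 t).const_mul 5).const_sub (x ^ 4)).const_mul (2 * x ^ 2)
  have hden : HasDerivAt (fun t' : ℝ => (t' ^ 2 + x ^ 4) ^ 2)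
      (2 * (t ^ 2 + x ^ 4) ^ 1 * (2 * t)) t := by
    have := ((hasDerivAt_pow 2 t).add_const (x ^ 4)).pow 2
    simpa [Pi.pow_def] using this
  have hd2 : ((t : ℝ) ^ 2 + x ^ 4) ^ 2 ≠ 0 := pow_ne_zero _ hd
  have h := hn.div hden hd2
  simp only [Pi.div_def] at h
  simp only [w13]
  refine h.congr_deriv ?_
  field_simp
  ring

-- second derivative of u in x (as derivative of the formula)
lemma hux2_13 (x t : ℝ) (hd : t ^ 2 + x ^ 4 ≠ 0) :
    HasDerivAt (fun x' => (4*t^3 - 12*x'^4*t)/(t^2+x'^4)^2)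
      ((48*x^7*t - 80*x^3*t^3)/(t^2+x^4)^3) x := by
  have hn : HasDerivAt (fun x' : ℝ => 4*t^3 - 12*x'^4*t)
      (-(12 * (4 * x ^ 3) * t)) x := by
    exact ((((hasDerivAt_pow 4 x).const_mul 12).mul_const t).const_sub (4*t^3))
  have hden : HasDerivAt (fun x' : ℝ => (t ^ 2 + x' ^ 4) ^ 2)
      (2 * (t ^ 2 + x ^ 4) ^ 1 * (4 * x ^ 3)) x := by
    simpa [Pi.pow_def] using ((hasDerivAt_pow 4 x).const_add (t ^ 2)).pow 2
  have hd2 : ((t : ℝ) ^ 2 + x ^ 4) ^ 2 ≠ 0 := pow_ne_zero _ hd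
  have h := hn.div hden hd2
  simp only [Pi.div_def] at h
  refine h.congr_deriv ?_
  field_simp
  ring

-- third derivative of u in x (as derivative of the second-derivative formula)
lemma hux3_13 (x t : ℝ) (hd : t ^ 2 + x ^ 4 ≠ 0) :
    HasDerivAt (fun x' => (48*x'^7*t - 80*x'^3*t^3)/(t^2+x'^4)^3)
      ((-240*x^2*t^5 + 1056*x^6*t^3 - 240*x^10*t)/(t^2+x^4)^4) x := by
  have hn : HasDerivAt (fun x' : ℝ => 48*x'^7*t - 80*x'^3*t^3)
      (48 * (7 * x ^ 6) * t - 80 * (3 * x ^ 2) * t ^ 3) x := by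
    exact (((hasDerivAt_pow 7 x).const_mul 48).mul_const t).sub
      (((hasDerivAt_pow 3 x).const_mul 80).mul_const (t^3))
  have hden : HasDerivAt (fun x' : ℝ => (t ^ 2 + x' ^ 4) ^ 3)
      (3 * (t ^ 2 + x ^ 4) ^ 2 * (4 * x ^ 3)) x := by
    simpa [Pi.pow_def] using ((hasDerivAt_pow 4 x).const_add (t ^ 2)).pow 3
  have hd2 : ((t : ℝ) ^ 2 + x ^ 4) ^ 3 ≠ 0 := pow_ne_zero _ hd
  have h := hn.div hden hd2
  simp only [Pi.div_def] at h
  refine h.congr_deriv ?_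
  field_simp
  ring

lemma iter3_13 (x t : ℝ) (hd : t ^ 2 + x ^ 4 ≠ 0) :
    iteratedDeriv 3 (fun x' => u13 x' t) x
      = (-240*x^2*t^5 + 1056*x^6*t^3 - 240*x^10*t)/(t^2+x^4)^4 := by
  rcases eq_or_ne t 0 with ht | ht
  · subst ht
    have hz : (fun x' => u13 x' 0) = fun _ : ℝ => (0:ℝ) := by
      funext y; simp [u13]
    rw [hz]
    simp [iteratedDeriv_succ]
  · have hdy : ∀ y : ℝ, t ^ 2 + y ^ 4 ≠ 0 := by
      intro y; positivity
    have e1 : deriv (fun x' => u13 x' t) = fun y => (4*t^3 - 12*y^4*t)/(t^2+y^4)^2 :=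
      funext fun y => (hux13 y t (hdy y)).deriv
    have e2 : deriv (fun y : ℝ => (4*t^3 - 12*y^4*t)/(t^2+y^4)^2)
        = fun y => (48*y^7*t - 80*y^3*t^3)/(t^2+y^4)^3 :=
      funext fun y => (hux2_13 y t (hdy y)).deriv
    have e3 : deriv (fun y : ℝ => (48*y^7*t - 80*y^3*t^3)/(t^2+y^4)^3) x
        = (-240*x^2*t^5 + 1056*x^6*t^3 - 240*x^10*t)/(t^2+x^4)^4 :=
      (hux3_13 x t hd).deriv
    rw [show (3:ℕ) = 2 + 1 from rfl, iteratedDeriv_succ,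
      show (2:ℕ) = 1 + 1 from rfl, iteratedDeriv_succ, iteratedDeriv_one,
      e1, e2, e3]

theorem stmt13 (x t : ℝ) (h : (x, t) ≠ (0, 0)) :
    deriv (fun t' => u13 x t') t + deriv (fun x' => w13 x' t) x
        + (3 / 2) * u13 x t * deriv (fun x' => u13 x' t) x = 0 ∧
    deriv (fun t' => w13 x t') t - (1 / 4) * iteratedDeriv 3 (fun x' => u13 x' t) x
        + (1 / 2) * u13 x t * deriv (fun x' => w13 x' t) x
        + w13 x t * deriv (fun x' => u13 x' t) x = 0 := by
  have hd : t ^ 2 + x ^ 4 ≠ 0 := by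
    intro h0
    apply h
    have ht2 : t ^ 2 = 0 := le_antisymm (by nlinarith [sq_nonneg (x^2)]) (sq_nonneg t)
    have hx4 : x ^ 4 = 0 := by nlinarith
    have ht : t = 0 := by
      have := pow_eq_zero_iff (n := 2) (by norm_num) |>.mp ht2; exact this
    have hx : x = 0 := by
      have := pow_eq_zero_iff (n := 4) (by norm_num) |>.mp hx4; exact this
    simp [hx, ht]
  rw [(hut13 x t hd).deriv, (hux13 x t hd).deriv, (hwx13 x t hd).deriv,
    (hwt13 x t hd).deriv, iter3_13 x t hd]
  simp only [u13, w13]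
  constructor
  · field_simp
    ring
  · field_simp
    ring
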